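/- Let a ∈ K and define a product on K[X] by X^k ∙ X^l = a·(k/(l+1))·X^{k+l}. Then this product satisfies the Leibniz identity: (P·Q)∙R = (P∙R)·Q + P·(Q∙R) for all P,Q,R ∈ K[X], where · is the usual polynomial multiplication. -/

import Mathlib

open Polynomial

theorem stmt_4 (K : Type*) [Field K] [CharZero K] (a : K)
    (B : K[X] →ₗ[K] K[X] →ₗ[K] K[X])
    (hB : ∀ k l : ℕ, B (X ^ k) (X ^ l) = (a * ((k : K) / ((l : K) + 1))) • X ^ (k + l)) :
    ∀ P Q R : K[X], B (P * Q) R = B P R * Q + P * B Q R := by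
  have key : ∀ p q r : ℕ, B (X ^ p * X ^ q) (X ^ r)
      = B (X ^ p) (X ^ r) * X ^ q + X ^ p * B (X ^ q) (X ^ r) := by
    intro p q r
    have hr : ((r : K) + 1) ≠ 0 := Nat.cast_add_one_ne_zero r
    rw [← pow_add, hB, hB, hB, smul_mul_assoc, mul_smul_comm, ← pow_add, ← pow_add,
      show p + r + q = p + q + r by ring, show p + (q + r) = p + q + r by ring, ← add_smul]
    congr 1
    push_cast
    field_simp
  have step1 : ∀ (p q : ℕ) (R : K[X]), B (X ^ p * X ^ q) R
      = B (X ^ p) R * X ^ q + X ^ p * B (X ^ q) R := by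
    intro p q R
    induction R using Polynomial.induction_on' with
    | add f g hf hg => simp only [map_add, hf, hg]; ring
    | monomial n c =>
        rw [← smul_X_eq_monomial, map_smul, map_smul, map_smul, key, smul_add,
          smul_mul_assoc, mul_smul_comm]
  have step2 : ∀ (p : ℕ) (Q R : K[X]), B (X ^ p * Q) R
      = B (X ^ p) R * Q + X ^ p * B Q R := by
    intro p Q R
    induction Q using Polynomial.induction_on' with
    | add f g hf hg =>
        simp only [mul_add, map_add, LinearMap.add_apply, hf, hg]; ring
    | monomial n c =>
        rw [← smul_X_eq_monomial, mul_smul_comm, map_smul, map_smul,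
          LinearMap.smul_apply, LinearMap.smul_apply, step1, smul_add]
        simp [mul_smul_comm, smul_mul_assoc]
  intro P Q R
  induction P using Polynomial.induction_on' with
  | add f g hf hg =>
      simp only [add_mul, map_add, LinearMap.add_apply, hf, hg]; ring
  | monomial n c =>
      rw [← smul_X_eq_monomial, smul_mul_assoc, map_smul, map_smul,
        LinearMap.smul_apply, LinearMap.smul_apply, step2, smul_add]
      simp [mul_smul_comm, smul_mul_assoc]
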